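/- (Mahler's volume inequality, lower bound with Mahler's constant) For every symmetric convex body C in ℝ^n with reciprocal C*, one has V(C)·V(C*) ≥ 4^n/(n!)^2, where V denotes n-dimensional Lebesgue measure. -/

import Mathlib

open Pointwise MeasureTheory Matrix

/-- Standard inner product on `ℝⁿ`. -/
def dotp {n : ℕ} (x y : Fin n → ℝ) : ℝ := ∑ i, x i * y i

/-- The reciprocal (polar) body of `C`. -/
def polarBody {n : ℕ} (C : Set (Fin n → ℝ)) : Set (Fin n → ℝ) :=
  {x | ∀ y ∈ C, dotp x y ≤ 1}

/-- Volume of the open unit `ℓ¹`-ball in `ℝⁿ`. -/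
lemma volume_l1_ball (n : ℕ) :
    volume {x : Fin n → ℝ | ∑ i, |x i| < 1} =
      ENNReal.ofReal (2 ^ n / (Nat.factorial n : ℝ)) := by
  have h := MeasureTheory.volume_sum_rpow_lt_one (Fin n) (le_refl (1 : ℝ))
  simp only [Real.rpow_one, Fintype.card_fin] at h
  rw [h]
  congr 1
  have h1 : (1 : ℝ) / 1 + 1 = 2 := by norm_num
  have h2 : (n : ℝ) / 1 + 1 = (n : ℝ) + 1 := by norm_num
  rw [h1, h2, Real.Gamma_nat_eq_factorial, Real.Gamma_two, mul_one]

/-- Convex combinations along the `ℓ¹`-ball stay in a symmetric convex set. -/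
lemma comb_mem {n : ℕ} {C : Set (Fin n → ℝ)} (hconv : Convex ℝ C) (hsym : C = -C)
    (h0 : (0 : Fin n → ℝ) ∈ C) {v : Fin n → Fin n → ℝ} (hv : ∀ i, v i ∈ C)
    {x : Fin n → ℝ} (hx : ∑ i, |x i| ≤ 1) : ∑ i, x i • v i ∈ C := by
  classical
  set p : Option (Fin n) → (Fin n → ℝ) :=
    fun o => o.elim 0 (fun i => if 0 ≤ x i then v i else -v i) with hp
  set w : Option (Fin n) → ℝ :=
    fun o => o.elim (1 - ∑ i, |x i|) (fun i => |x i|) with hw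
  have hwnn : ∀ o ∈ Finset.univ, 0 ≤ w o := by
    rintro (_ | i) _
    · simpa [hw] using hx
    · simp [hw, abs_nonneg]
  have hsum : ∑ o : Option (Fin n), w o = 1 := by
    rw [Fintype.sum_option]
    simp [hw]
  have hpC : ∀ o ∈ Finset.univ, p o ∈ C := by
    rintro (_ | i) _
    · simpa [hp] using h0
    · by_cases h : 0 ≤ x i
      · simpa [hp, h] using hv i
      · simp only [hp, Option.elim, h, if_false]
        rw [hsym]
        exact Set.neg_mem_neg.mpr (hv i)
  have key := hconv.sum_mem hwnn hsum hpC
  have : ∑ o : Option (Fin n), w o • p o = ∑ i, x i • v i := by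
    rw [Fintype.sum_option]
    simp only [hw, hp, Option.elim, smul_zero, zero_add]
    · refine Finset.sum_congr rfl fun i _ => ?_
      by_cases h : 0 ≤ x i
      · rw [if_pos h, abs_of_nonneg h]
      · rw [if_neg h, abs_of_neg (not_le.mp h), smul_neg, neg_smul, neg_neg]
  rwa [this] at key

/-- Lower bound on the volume of a set containing the image of the `ℓ¹`-ball
under the transpose of a matrix. -/
lemma vol_lower {n : ℕ} {C : Set (Fin n → ℝ)} (M : Matrix (Fin n) (Fin n) ℝ)
    (h : ∀ x : Fin n → ℝ, ∑ i, |x i| < 1 → Mᵀ *ᵥ x ∈ C) :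
    ENNReal.ofReal (|M.det| * (2 ^ n / (Nat.factorial n : ℝ))) ≤ volume C := by
  classical
  set S : Set (Fin n → ℝ) := {x | ∑ i, |x i| < 1} with hS
  have himg : (Matrix.toLin' Mᵀ) '' S ⊆ C := by
    rintro - ⟨x, hx, rfl⟩
    simpa [Matrix.toLin'_apply] using h x hx
  calc ENNReal.ofReal (|M.det| * (2 ^ n / (Nat.factorial n : ℝ)))
      = ENNReal.ofReal |LinearMap.det (Matrix.toLin' Mᵀ)| * volume S := by
        rw [ENNReal.ofReal_mul (abs_nonneg _), volume_l1_ball,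
          LinearMap.det_toLin', Matrix.det_transpose]
    _ = volume ((Matrix.toLin' Mᵀ) '' S) :=
        (MeasureTheory.Measure.addHaar_image_linearMap volume _ S).symm
    _ ≤ volume C := measure_mono himg

/-- Mahler's lower bound for the volume product:
`V(C) · V(C*) ≥ 4ⁿ / (n!)²` for every symmetric convex body `C` in `ℝⁿ`. -/
theorem mahler_volume_product_lower_bound
    (n : ℕ) (C : Set (Fin n → ℝ))
    (hcomp : IsCompact C) (hconv : Convex ℝ C) (hsym : C = -C)
    (h0 : (0 : Fin n → ℝ) ∈ interior C) :
    ENNReal.ofReal (4 ^ n / ((Nat.factorial n : ℝ)) ^ 2) ≤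
      volume C * volume (polarBody C) := by
  classical
  have h0C : (0 : Fin n → ℝ) ∈ C := interior_subset h0
  -- the compact set of tuples of points of C
  set K : Set (Fin n → Fin n → ℝ) := Set.pi Set.univ (fun _ => C) with hK
  have hKcomp : IsCompact K := isCompact_univ_pi (fun _ => hcomp)
  have hKne : K.Nonempty := ⟨fun _ => 0, fun _ _ => h0C⟩
  have hcont : Continuous fun v : Fin n → Fin n → ℝ => |(Matrix.of v).det| := by
    have : Continuous fun m : Matrix (Fin n) (Fin n) ℝ => |m.det| :=
      continuous_id.matrix_det.abs
    exact this
  obtain ⟨v, hvK, hvmax⟩ := hKcomp.exists_isMaxOn hKne hcont.continuousOn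
  have hvC : ∀ i, v i ∈ C := fun i => hvK i (Set.mem_univ i)
  set M : Matrix (Fin n) (Fin n) ℝ := Matrix.of v with hM
  set D : ℝ := |M.det| with hD
  -- D is positive
  have hDpos : 0 < D := by
    obtain ⟨ε, hε, hball⟩ := Metric.mem_nhds_iff.mp (mem_interior_iff_mem_nhds.mp h0)
    set u : Fin n → Fin n → ℝ := fun i => Pi.single i (ε / 2) with hu
    have huK : u ∈ K := by
      intro i _
      apply hball
      rw [Metric.mem_ball, dist_zero_right, hu, Pi.norm_single, Real.norm_eq_abs,
        abs_of_pos (by linarith)]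
      linarith
    have hud : Matrix.of u = Matrix.diagonal (fun _ => ε / 2) := by
      ext i j
      simp [hu, Pi.single_apply, Matrix.diagonal, eq_comm]
    have := hvmax huK
    have hdet : |(Matrix.of u).det| = (ε / 2) ^ n := by
      rw [hud, Matrix.det_diagonal, Finset.prod_const, Finset.card_univ, Fintype.card_fin,
        abs_pow, abs_of_pos (by linarith)]
    have hpos : (0 : ℝ) < (ε / 2) ^ n := pow_pos (by linarith) n
    calc (0 : ℝ) < (ε / 2) ^ n := hpos
      _ = |(Matrix.of u).det| := hdet.symm
      _ ≤ |(Matrix.of v).det| := this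
      _ = D := rfl
  have hdet_ne : M.det ≠ 0 := fun h => by simp [hD, h] at hDpos
  have hdet_unit : IsUnit Mᵀ.det :=
    isUnit_iff_ne_zero.mpr (by rw [Matrix.det_transpose]; exact hdet_ne)
  -- the primal cross-polytope
  have h1 : ENNReal.ofReal (D * (2 ^ n / (Nat.factorial n : ℝ))) ≤ volume C := by
    apply vol_lower M
    intro x hx
    have : Mᵀ *ᵥ x = ∑ i, x i • v i := by
      ext k
      simp [Matrix.mulVec, dotProduct, Matrix.transpose_apply, hM, mul_comm]
    rw [this]
    exact comb_mem hconv hsym h0C hvC hx.le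
  -- the dual cross-polytope: rows of (Mᵀ)⁻¹
  set W : Matrix (Fin n) (Fin n) ℝ := (Mᵀ)⁻¹ with hW
  -- each row of W pairs with points of C with absolute value at most 1
  have hWrow : ∀ (y : Fin n → ℝ), y ∈ C → ∀ i, |(W *ᵥ y) i| ≤ 1 := by
    intro y hy i
    have hcr : Mᵀ.det • (Mᵀ)⁻¹ *ᵥ y = Matrix.cramer Mᵀ y :=
      Matrix.det_smul_inv_mulVec_eq_cramer Mᵀ y hdet_unit
    have hcr' : (W *ᵥ y) i = (M.updateRow i y).det / M.det := by
      have hc := congrFun hcr i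
      simp only [Pi.smul_apply, smul_eq_mul, Matrix.det_transpose] at hc
      rw [Matrix.cramer_transpose_apply] at hc
      rw [hW, eq_div_iff hdet_ne]
      linarith [hc]
    -- the updated matrix has rows in C, so its determinant is bounded by D
    have hupd : (Function.update v i y) ∈ K := by
      intro j _
      rcases eq_or_ne j i with rfl | hne
      · simpa using hy
      · simpa [Function.update_apply, hne] using hvC j
    have hle : |(M.updateRow i y).det| ≤ D := by
      have h1 : |(Matrix.of (Function.update v i y)).det| ≤ D := hvmax hupd
      have heq : Matrix.of (Function.update v i y) = M.updateRow i y := rfl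
      rwa [heq] at h1
    rw [hcr', abs_div]
    rw [div_le_one (by exact hDpos)]
    exact hle
  have h2 : ENNReal.ofReal (D⁻¹ * (2 ^ n / (Nat.factorial n : ℝ))) ≤ volume (polarBody C) := by
    have hWd : |W.det| = D⁻¹ := by
      rw [hW, Matrix.det_nonsing_inv, Matrix.det_transpose, Ring.inverse_eq_inv', abs_inv]
    rw [← hWd]
    apply vol_lower W
    intro x hx
    intro y hy
    have hdot : dotp (Wᵀ *ᵥ x) y = ∑ i, x i * (W *ᵥ y) i := by
      simp only [dotp, Matrix.mulVec, dotProduct, Matrix.transpose_apply,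
        Finset.sum_mul, Finset.mul_sum]
      rw [Finset.sum_comm]
      exact Finset.sum_congr rfl fun i _ => Finset.sum_congr rfl fun k _ => by ring
    rw [hdot]
    calc ∑ i, x i * (W *ᵥ y) i ≤ ∑ i, |x i * (W *ᵥ y) i| :=
          Finset.sum_le_sum fun i _ => le_abs_self _
      _ ≤ ∑ i, |x i| := by
          refine Finset.sum_le_sum fun i _ => ?_
          rw [abs_mul]
          exact mul_le_of_le_one_right (abs_nonneg _) (hWrow y hy i)
      _ ≤ 1 := hx.le
  -- combine
  have hfact : (0 : ℝ) < (Nat.factorial n : ℝ) := by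
    exact_mod_cast Nat.factorial_pos n
  have harith : (4 : ℝ) ^ n / ((Nat.factorial n : ℝ)) ^ 2 =
      (D * (2 ^ n / (Nat.factorial n : ℝ))) * (D⁻¹ * (2 ^ n / (Nat.factorial n : ℝ))) := by
    have h4 : (4 : ℝ) ^ n = 2 ^ n * 2 ^ n := by rw [← mul_pow]; norm_num
    have hD0 : D ≠ 0 := ne_of_gt hDpos
    field_simp [h4]
    rw [h4]; ring
  calc ENNReal.ofReal (4 ^ n / ((Nat.factorial n : ℝ)) ^ 2)
      = ENNReal.ofReal (D * (2 ^ n / (Nat.factorial n : ℝ))) *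
        ENNReal.ofReal (D⁻¹ * (2 ^ n / (Nat.factorial n : ℝ))) := by
        rw [← ENNReal.ofReal_mul (by positivity), ← harith]
    _ ≤ volume C * volume (polarBody C) := mul_le_mul' h1 h2
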